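/- Let Γ, Q⁰ ∈ ℚ[[x₁,x₂,y₁,y₂]], set δ₁ := Γ_{x₂} and δ₂ := 0, and assume for each i ∈ {1,2}: (i) Q⁰_{x_i x_i} = −2δ_i − 2Γ_{y_i x_i} − B((Γ_{x₁},Γ_{x₂}),(Γ_{x₁x_ix_i},Γ_{x₂x_ix_i})), and (ii) 2Γ_{y_i x_i} + 2δ_i = B((Γ_{x₁x_i},Γ_{x₂x_i}),(Γ_{x₁x_i},Γ_{x₂x_i})). Then for each i ∈ {1,2}: ∂²/∂x_i² ( Q⁰ + (1/2)·B((Γ_{x₁},Γ_{x₂}),(Γ_{x₁},Γ_{x₂})) ) = 0. (This is Corollary 2.4 of the paper: granting the k=0 case of the Q-potential equation after the dilaton equation, together with the integrated topological recursion relation, the potential Q⁰ equals −(1/2) Σ_{e,f} Γ_{x_e} γ^{ef} Γ_{x_f} up to terms of degree ≤ 1 in each x_i.) -/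

import Mathlib

/-- Formal partial derivative of a multivariate power series with respect to the `i`-th
variable: the coefficient at a monomial `m` is `(m i + 1)` times the coefficient at
`m + eᵢ`. -/
noncomputable def pd {n : ℕ} (i : Fin n) (F : MvPowerSeries (Fin n) ℚ) :
    MvPowerSeries (Fin n) ℚ :=
  fun m => ((m i : ℚ) + 1) * MvPowerSeries.coeff (m + Finsupp.single i 1) F

/-- The deformed-metric pairing of `ℙ²` on pairs of power series in `ℚ[[x₁,x₂,y₁,y₂]]`
(variables `x₁,x₂,y₁,y₂ = 0,1,2,3`):
`B((a₁,a₂),(b₁,b₂)) = a₁b₁ + 2y₁(a₁b₂ + a₂b₁) + (2y₁²+2y₂)a₂b₂`. -/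
noncomputable def Bform
    (a b : MvPowerSeries (Fin 4) ℚ × MvPowerSeries (Fin 4) ℚ) :
    MvPowerSeries (Fin 4) ℚ :=
  a.1 * b.1 + 2 * MvPowerSeries.X 2 * (a.1 * b.2 + a.2 * b.1) +
    (2 * MvPowerSeries.X 2 ^ 2 + 2 * MvPowerSeries.X 3) * (a.2 * b.2)

/-- The variable `x_i` for `i ∈ {1,2}` is the variable of index `0` resp. `1`. -/
def xv : Fin 2 → Fin 4 := ![0, 1]

/-- The variable `y_i` for `i ∈ {1,2}` is the variable of index `2` resp. `3`. -/
def yv : Fin 2 → Fin 4 := ![2, 3]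

open Finset MvPowerSeries

lemma pd_coeff {n : ℕ} (i : Fin n) (F : MvPowerSeries (Fin n) ℚ) (m : Fin n →₀ ℕ) :
    coeff m (pd i F) = ((m i : ℚ) + 1) * coeff (m + Finsupp.single i 1) F := rfl

lemma pd_add {n : ℕ} (i : Fin n) (F G : MvPowerSeries (Fin n) ℚ) :
    pd i (F + G) = pd i F + pd i G := by
  apply MvPowerSeries.ext; intro m
  simp [pd_coeff, map_add, mul_add]

lemma pd_mul {n : ℕ} (i : Fin n) (F G : MvPowerSeries (Fin n) ℚ) :
    pd i (F * G) = pd i F * G + F * pd i G := by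
  apply MvPowerSeries.ext; intro m
  set e : Fin n →₀ ℕ := Finsupp.single i 1 with he
  have key : ∀ A B : MvPowerSeries (Fin n) ℚ,
      (∑ p ∈ antidiagonal (m + e), (p.1 i : ℚ) * (coeff p.1 A * coeff p.2 B))
      = ∑ q ∈ antidiagonal m, ((q.1 i : ℚ) + 1) * (coeff (q.1 + e) A * coeff q.2 B) := by
    intro A B
    rw [← Finset.sum_filter_of_ne (p := fun p : (Fin n →₀ ℕ) × (Fin n →₀ ℕ) => p.1 i ≠ 0)
      (fun p _ hne => by intro h0; apply hne; rw [h0]; push_cast; ring)]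
    apply Finset.sum_bij' (fun p _ => ((p.1 - e, p.2) : (Fin n →₀ ℕ) × (Fin n →₀ ℕ)))
      (fun q _ => ((q.1 + e, q.2) : (Fin n →₀ ℕ) × (Fin n →₀ ℕ)))
    · intro p hp
      simp only [Finset.mem_filter, Finset.HasAntidiagonal.mem_antidiagonal] at hp
      obtain ⟨hsum, hi⟩ := hp
      have hi' : 1 ≤ p.1 i := Nat.one_le_iff_ne_zero.mpr hi
      rw [Finset.HasAntidiagonal.mem_antidiagonal]
      ext j
      have hj := DFunLike.congr_fun hsum j
      simp only [Finsupp.coe_add, Pi.add_apply, Finsupp.coe_tsub, Pi.sub_apply, he,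
        Finsupp.single_apply] at hj ⊢
      rcases eq_or_ne i j with rfl | hne
      · simp only [if_pos rfl, if_true] at hj ⊢; omega
      · simp only [if_neg hne] at hj ⊢; omega
    · intro q hq
      rw [Finset.HasAntidiagonal.mem_antidiagonal] at hq
      simp only [Finset.mem_filter, Finset.HasAntidiagonal.mem_antidiagonal]
      constructor
      · rw [add_right_comm, hq]
      · simp [he, Finsupp.single_apply]
    · intro p hp
      simp only [Finset.mem_filter, Finset.HasAntidiagonal.mem_antidiagonal] at hp
      have hle : e ≤ p.1 := by
        rw [he, Finsupp.single_le_iff]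
        exact Nat.one_le_iff_ne_zero.mpr hp.2
      simp [tsub_add_cancel_of_le hle]
    · intro q hq
      simp
    · intro p hp
      simp only [Finset.mem_filter, Finset.HasAntidiagonal.mem_antidiagonal] at hp
      have h1 : 1 ≤ p.1 i := Nat.one_le_iff_ne_zero.mpr hp.2
      have hle : e ≤ p.1 := by rw [he, Finsupp.single_le_iff]; exact h1
      rw [tsub_add_cancel_of_le hle]
      congr 1
      have h2 : (p.1 - e) i = p.1 i - 1 := by
        simp [he, Finsupp.tsub_apply]
      rw [h2]
      push_cast [Nat.cast_sub h1]
      ring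
  have swapsum : ∀ (d : Fin n →₀ ℕ) (f : (Fin n →₀ ℕ) × (Fin n →₀ ℕ) → ℚ),
      (∑ p ∈ antidiagonal d, f p) = ∑ p ∈ antidiagonal d, f p.swap := by
    intro d f
    conv_lhs => rw [← Finset.HasAntidiagonal.map_swap_antidiagonal (n := d), Finset.sum_map]
    rfl
  have key2 : ∀ A B : MvPowerSeries (Fin n) ℚ,
      (∑ p ∈ antidiagonal (m + e), (p.2 i : ℚ) * (coeff p.1 A * coeff p.2 B))
      = ∑ q ∈ antidiagonal m, ((q.2 i : ℚ) + 1) * (coeff q.1 A * coeff (q.2 + e) B) := by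
    intro A B
    rw [swapsum (m + e), swapsum m]
    simp only [Prod.fst_swap, Prod.snd_swap]
    rw [show (∑ p ∈ antidiagonal (m+e), (p.1 i : ℚ) * (coeff p.2 A * coeff p.1 B))
        = ∑ p ∈ antidiagonal (m+e), (p.1 i : ℚ) * (coeff p.1 B * coeff p.2 A) from
      Finset.sum_congr rfl fun p _ => by ring]
    rw [key B A]
    exact Finset.sum_congr rfl fun q _ => by ring
  rw [pd_coeff, map_add, coeff_mul, coeff_mul, coeff_mul, Finset.mul_sum]
  have split : ∀ p ∈ antidiagonal (m + e),
      ((m i : ℚ) + 1) * (coeff p.1 F * coeff p.2 G)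
      = (p.1 i : ℚ) * (coeff p.1 F * coeff p.2 G)
        + (p.2 i : ℚ) * (coeff p.1 F * coeff p.2 G) := by
    intro p hp
    rw [Finset.HasAntidiagonal.mem_antidiagonal] at hp
    have hpi : p.1 i + p.2 i = m i + 1 := by
      have := DFunLike.congr_fun hp i
      simpa [he] using this
    rw [← add_mul]
    congr 1
    rw [show ((m i : ℚ) + 1) = ((m i + 1 : ℕ) : ℚ) by push_cast; ring, ← hpi]
    push_cast; ring
  rw [Finset.sum_congr rfl split, Finset.sum_add_distrib, key F G, key2 F G]
  congr 1
  · apply Finset.sum_congr rfl; intro q hq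
    rw [pd_coeff]; ring
  · apply Finset.sum_congr rfl; intro q hq
    rw [pd_coeff]; ring

lemma pd_X_ne {n : ℕ} (i j : Fin n) (h : j ≠ i) :
    pd i (MvPowerSeries.X j : MvPowerSeries (Fin n) ℚ) = 0 := by
  apply MvPowerSeries.ext; intro m
  rw [pd_coeff, MvPowerSeries.coeff_X, if_neg, map_zero, mul_zero]
  intro hc
  have := DFunLike.congr_fun hc i
  simp only [Finsupp.coe_add, Pi.add_apply, Finsupp.single_apply, if_pos rfl, if_true, if_neg h] at this
  omega

lemma pd_C {n : ℕ} (i : Fin n) (c : ℚ) :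
    pd i ((MvPowerSeries.C c : MvPowerSeries (Fin n) ℚ)) = 0 := by
  apply MvPowerSeries.ext; intro m
  rw [pd_coeff, MvPowerSeries.coeff_C, if_neg, map_zero, mul_zero]
  intro hc
  have := DFunLike.congr_fun hc i
  simp at this

lemma pd_two {n : ℕ} (i : Fin n) :
    pd i (2 : MvPowerSeries (Fin n) ℚ) = 0 := by
  rw [show (2 : MvPowerSeries (Fin n) ℚ) = (MvPowerSeries.C (2 : ℚ) : MvPowerSeries (Fin n) ℚ) from
    (map_ofNat (MvPowerSeries.C (σ := Fin n) (R := ℚ)) 2).symm]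
  exact pd_C i 2

lemma pd_C_mul {n : ℕ} (i : Fin n) (c : ℚ) (F : MvPowerSeries (Fin n) ℚ) :
    pd i ((MvPowerSeries.C c : MvPowerSeries (Fin n) ℚ) * F) = (MvPowerSeries.C c : MvPowerSeries (Fin n) ℚ) * pd i F := by
  rw [pd_mul, pd_C, zero_mul, zero_add]

/-- Let `Γ, Q⁰ ∈ ℚ[[x₁,x₂,y₁,y₂]]`, set `δ₁ = Γ_{x₂}`, `δ₂ = 0`, and assume for
each `i ∈ {1,2}`:
(i) `Q⁰_{x_i x_i} = −2δ_i − 2Γ_{y_i x_i} − B((Γ_{x₁},Γ_{x₂}),(Γ_{x₁x_ix_i},Γ_{x₂x_ix_i}))`, and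
(ii) `2Γ_{y_i x_i} + 2δ_i = B((Γ_{x₁x_i},Γ_{x₂x_i}),(Γ_{x₁x_i},Γ_{x₂x_i}))`.
Then for each `i ∈ {1,2}`:
`∂²/∂x_i² (Q⁰ + (1/2)B((Γ_{x₁},Γ_{x₂}),(Γ_{x₁},Γ_{x₂}))) = 0`.
This is Corollary 2.4 of the paper. -/
theorem Q0_potential_P2
    (Γ Q0 : MvPowerSeries (Fin 4) ℚ)
    (δ : Fin 2 → MvPowerSeries (Fin 4) ℚ)
    (hδ : δ = ![pd 1 Γ, 0])
    (h1 : ∀ i : Fin 2,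
      pd (xv i) (pd (xv i) Q0) =
        -2 * δ i - 2 * pd (xv i) (pd (yv i) Γ) -
          Bform (pd 0 Γ, pd 1 Γ)
            (pd (xv i) (pd (xv i) (pd 0 Γ)), pd (xv i) (pd (xv i) (pd 1 Γ))))
    (h2 : ∀ i : Fin 2,
      2 * pd (xv i) (pd (yv i) Γ) + 2 * δ i =
        Bform (pd (xv i) (pd 0 Γ), pd (xv i) (pd 1 Γ))
          (pd (xv i) (pd 0 Γ), pd (xv i) (pd 1 Γ))) :
    ∀ i : Fin 2,
      pd (xv i) (pd (xv i)
        (Q0 + MvPowerSeries.C (1 / 2 : ℚ) *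
          Bform (pd 0 Γ, pd 1 Γ) (pd 0 Γ, pd 1 Γ))) = 0 := by
  intro i
  have hx2 : pd (xv i) (MvPowerSeries.X 2 : MvPowerSeries (Fin 4) ℚ) = 0 :=
    pd_X_ne _ _ (by fin_cases i <;> decide)
  have hx3 : pd (xv i) (MvPowerSeries.X 3 : MvPowerSeries (Fin 4) ℚ) = 0 :=
    pd_X_ne _ _ (by fin_cases i <;> decide)
  have hB : pd (xv i) (pd (xv i) (Bform (pd 0 Γ, pd 1 Γ) (pd 0 Γ, pd 1 Γ))) =
      2 * (Bform (pd 0 Γ, pd 1 Γ)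
            (pd (xv i) (pd (xv i) (pd 0 Γ)), pd (xv i) (pd (xv i) (pd 1 Γ))) +
          Bform (pd (xv i) (pd 0 Γ), pd (xv i) (pd 1 Γ))
            (pd (xv i) (pd 0 Γ), pd (xv i) (pd 1 Γ))) := by
    simp only [Bform, pow_two, pd_add, pd_mul, hx2, hx3, pd_two, zero_mul, mul_zero,
      add_zero, zero_add]
    ring
  have hhalf : (MvPowerSeries.C (1/2 : ℚ) : MvPowerSeries (Fin 4) ℚ) * 2 = 1 := by
    rw [show (2 : MvPowerSeries (Fin 4) ℚ) = (MvPowerSeries.C (2 : ℚ) : MvPowerSeries (Fin 4) ℚ) from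
      (map_ofNat (MvPowerSeries.C (σ := Fin 4) (R := ℚ)) 2).symm, ← map_mul]
    norm_num
  rw [pd_add, pd_add, h1 i, pd_C_mul, pd_C_mul, hB]
  linear_combination
    (Bform (pd 0 Γ, pd 1 Γ)
        (pd (xv i) (pd (xv i) (pd 0 Γ)), pd (xv i) (pd (xv i) (pd 1 Γ))) +
      Bform (pd (xv i) (pd 0 Γ), pd (xv i) (pd 1 Γ))
        (pd (xv i) (pd 0 Γ), pd (xv i) (pd 1 Γ))) * hhalf - h2 i
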